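/- Let H be a k-edge-colored finite multigraph with loops and η : V(H) → ℕ with η(w) = 1 implying ℓ_H(w) = 0. Then there is a loopless η-detachment G with amalgamation function ψ such that: for each w with η(w) ≥ 2 and distinct u, u' ∈ ψ⁻¹(w), the multiplicity m_G(u,u') lies between ⌊ℓ_H(w)/C(η(w),2)⌋ and ⌈ℓ_H(w)/C(η(w),2)⌉; and for distinct w, z ∈ V(H), u ∈ ψ⁻¹(w), v ∈ ψ⁻¹(z), m_G(u,v) lies between ⌊m_H(w,z)/(η(w)η(z))⌋ and ⌈m_H(w,z)/(η(w)η(z))⌉. -/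

import Mathlib

/-- Degree of `v` (loops count twice). -/
noncomputable def gDeg {V E : Type} (ends : E → V × V) (v : V) : ℕ :=
  Nat.card {e : E // (ends e).1 = v} + Nat.card {e : E // (ends e).2 = v}

/-- Degree of `v` in the color class `j` (loops count twice). -/
noncomputable def gColorDeg {V E : Type} {k : ℕ} (ends : E → V × V) (c : E → Fin k)
    (j : Fin k) (v : V) : ℕ :=
  Nat.card {e : E // c e = j ∧ (ends e).1 = v} +
    Nat.card {e : E // c e = j ∧ (ends e).2 = v}

/-- Number of loops at `v`. -/
noncomputable def gLoops {V E : Type} (ends : E → V × V) (v : V) : ℕ :=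
  Nat.card {e : E // ends e = (v, v)}

/-- Number of edges joining `u` and `v`. -/
noncomputable def gMult {V E : Type} (ends : E → V × V) (u v : V) : ℕ :=
  Nat.card {e : E // ends e = (u, v) ∨ ends e = (v, u)}

/-- `ends'` gives an `η`-detachment of the graph `(V, E, ends)`: each vertex `w`
splits into the `η w` vertices `⟨w, t⟩`, and each edge keeps the same endpoints
after projecting back via `Sigma.fst` (the amalgamation function `ψ`). -/
def IsDetachment {V E : Type} (ends : E → V × V) (η : V → ℕ)
    (ends' : E → (Σ w : V, Fin (η w)) × (Σ w : V, Fin (η w))) : Prop :=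
  ∀ e : E, ((ends' e).1.1, (ends' e).2.1) = ends e ∨
    ((ends' e).2.1, (ends' e).1.1) = ends e

theorem card_mod_lower (m N code : ℕ) (hN : 0 < N) (hcode : code < N) :
    m / N ≤ Nat.card {i : Fin m // i.val % N = code} := by
  rw [Nat.card_eq_fintype_card]
  have hlt : ∀ q : Fin (m / N), N * q.val + code < m := by
    intro q
    have h1 : N * (q.val + 1) ≤ N * (m / N) := Nat.mul_le_mul_left N q.isLt
    have h2 : N * (m / N) ≤ m := Nat.mul_div_le m N
    have h3 : N * (q.val + 1) = N * q.val + N := by ring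
    omega
  have := Fintype.card_le_of_injective
    (fun q : Fin (m / N) =>
      (⟨⟨N * q.val + code, hlt q⟩, by simp [Nat.mul_add_mod, Nat.mod_eq_of_lt hcode]⟩ :
        {i : Fin m // i.val % N = code}))
    (by
      intro q q' h
      have h2 : N * q.val + code = N * q'.val + code := congrArg (fun x => x.val.val) h
      have : q.val = q'.val := by
        have := Nat.eq_of_mul_eq_mul_left hN (by omega : N * q.val = N * q'.val)
        exact this
      exact Fin.ext this)
  simpa using this

theorem mod_inj (N : ℕ) (a b : ℕ) (h1 : a % N = b % N) (h2 : a / N = b / N) : a = b := by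
  have e1 := Nat.div_add_mod a N
  have e2 := Nat.div_add_mod b N
  rw [h1, h2] at e1
  omega

theorem card_mod_upper (m N code : ℕ) (hN : 0 < N) :
    Nat.card {i : Fin m // i.val % N = code} ≤ m / N + 1 := by
  rw [Nat.card_eq_fintype_card]
  have := Fintype.card_le_of_injective
    (fun i : {i : Fin m // i.val % N = code} =>
      (⟨i.val.val / N, Nat.lt_succ_of_le (Nat.div_le_div_right (Nat.le_of_lt i.val.isLt))⟩ :
        Fin (m / N + 1)))
    (by
      intro i i' h
      have h2 : i.val.val / N = i'.val.val / N := congrArg Fin.val h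
      exact Subtype.ext (Fin.ext (mod_inj N _ _ (i.2.trans i'.2.symm) h2)))
  simpa using this

theorem card_mod_upper_dvd (m N code : ℕ) (hN : 0 < N) (hdvd : N ∣ m) :
    Nat.card {i : Fin m // i.val % N = code} ≤ m / N := by
  rw [Nat.card_eq_fintype_card]
  have := Fintype.card_le_of_injective
    (fun i : {i : Fin m // i.val % N = code} =>
      (⟨i.val.val / N, Nat.div_lt_div_of_lt_of_dvd hdvd i.val.isLt⟩ : Fin (m / N)))
    (by
      intro i i' h
      have h2 : i.val.val / N = i'.val.val / N := congrArg Fin.val h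
      exact Subtype.ext (Fin.ext (mod_inj N _ _ (i.2.trans i'.2.symm) h2)))
  simpa using this

theorem bounds_final (m N cnt : ℕ) (hN : 0 < N)
    (h1 : m / N ≤ cnt) (h2 : cnt ≤ m / N + 1) (h3 : N ∣ m → cnt ≤ m / N) :
    ⌊(m : ℚ) / (N : ℚ)⌋ ≤ (cnt : ℤ) ∧ (cnt : ℤ) ≤ ⌈(m : ℚ) / (N : ℚ)⌉ := by
  have hfloor : ⌊(m : ℚ) / (N : ℚ)⌋ = ((m / N : ℕ) : ℤ) := by
    rw [show ((m : ℚ)) = ((m : ℤ) : ℚ) by push_cast; ring,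
      Rat.floor_intCast_div_natCast]
    simp [Int.natCast_ediv]
  constructor
  · rw [hfloor]; exact_mod_cast h1
  · by_cases hdvd : N ∣ m
    · have heq : (m : ℚ) / (N : ℚ) = ((m / N : ℕ) : ℚ) := by
        obtain ⟨c, rfl⟩ := hdvd
        rw [Nat.mul_div_cancel_left c hN]
        push_cast
        field_simp
      rw [heq, Int.ceil_natCast]
      exact_mod_cast h3 hdvd
    · have hlt : ((m / N : ℕ) : ℚ) < (m : ℚ) / (N : ℚ) := by
        rw [lt_div_iff₀ (by exact_mod_cast hN)]
        have hmn : N * (m / N) < m := by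
          have e := Nat.div_add_mod m N
          have : m % N ≠ 0 := fun h => hdvd (Nat.dvd_of_mod_eq_zero h)
          omega
        calc ((m / N : ℕ) : ℚ) * (N : ℚ) = ((N * (m / N) : ℕ) : ℚ) := by push_cast; ring
          _ < (m : ℚ) := by exact_mod_cast hmn
      have hc : ((m / N : ℕ) : ℤ) < ⌈(m : ℚ) / (N : ℚ)⌉ := Int.lt_ceil.2 hlt
      calc (cnt : ℤ) ≤ ((m / N : ℕ) : ℤ) + 1 := by exact_mod_cast h2
        _ ≤ ⌈(m : ℚ) / (N : ℚ)⌉ := Int.add_one_le_iff.mpr hc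

section DetachAux

-- pair equiv
theorem card_lt_pairs (n : ℕ) :
    Fintype.card {p : Fin n × Fin n // p.1 < p.2} = n.choose 2 := by
  have e : {p : Fin n × Fin n // p.1 < p.2} ≃ Σ b : Fin n, Fin b.val :=
    { toFun := fun p => ⟨p.1.2, ⟨p.1.1.val, p.2⟩⟩
      invFun := fun x => ⟨(⟨x.2.val, lt_trans x.2.isLt x.1.isLt⟩, x.1), x.2.isLt⟩
      left_inv := fun p => by ext <;> rfl
      right_inv := fun x => by rfl }
  rw [Fintype.card_congr e, Fintype.card_sigma]
  simp only [Fintype.card_fin]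
  exact (Fin.sum_univ_eq_sum_range (fun i => i) n).trans
    (by rw [Finset.sum_range_id, Nat.choose_two_right])

noncomputable def pairEquiv (n : ℕ) : Fin (n.choose 2) ≃ {p : Fin n × Fin n // p.1 < p.2} :=
  (Fintype.equivFinOfCardEq (card_lt_pairs n)).symm

noncomputable def pairSlot {m n : ℕ} (hm : 0 < m) (hn : 0 < n) (i : ℕ) : Fin m × Fin n :=
  (⟨(i % (m * n)) % m, Nat.mod_lt _ hm⟩,
   ⟨(i % (m * n)) / m, Nat.div_lt_of_lt_mul (Nat.mod_lt _ (Nat.mul_pos hm hn))⟩)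

theorem code_lt {m n : ℕ} (t : Fin m) (s : Fin n) : t.val + m * s.val < m * n := by
  have h1 : s.val + 1 ≤ n := s.isLt
  have h2 : m * (s.val + 1) ≤ m * n := Nat.mul_le_mul_left m h1
  have h3 : m * (s.val + 1) = m * s.val + m := by ring
  have h4 := t.isLt
  omega

theorem pairSlot_eq_iff {m n : ℕ} (hm : 0 < m) (hn : 0 < n) (i : ℕ) (t : Fin m) (s : Fin n) :
    pairSlot hm hn i = (t, s) ↔ i % (m * n) = t.val + m * s.val := by
  constructor
  · intro h
    have h1 : (i % (m * n)) % m = t.val := congrArg (fun x => x.1.val) h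
    have h2 : (i % (m * n)) / m = s.val := congrArg (fun x => x.2.val) h
    have h3 := Nat.div_add_mod (i % (m * n)) m
    rw [h1, h2] at h3
    omega
  · intro h
    have ht : (i % (m * n)) % m = t.val := by
      rw [h, Nat.add_mul_mod_self_left, Nat.mod_eq_of_lt t.isLt]
    have hs : (i % (m * n)) / m = s.val := by
      rw [h, Nat.add_mul_div_left _ _ hm, Nat.div_eq_of_lt t.isLt, Nat.zero_add]
    unfold pairSlot
    rw [Prod.ext_iff]
    exact ⟨Fin.ext ht, Fin.ext hs⟩

variable {V E : Type} [Fintype E] [LinearOrder V] [LinearOrder E]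
variable (ends : E → V × V) (η : V → ℕ)

noncomputable def ends0 (e : E) : V × V :=
  if (ends e).1 ≤ (ends e).2 then ends e else ((ends e).2, (ends e).1)

theorem ends0_le (e : E) : (ends0 ends e).1 ≤ (ends0 ends e).2 := by
  unfold ends0; split
  · assumption
  · exact le_of_not_ge ‹_›

theorem ends0_spec (e : E) :
    ends0 ends e = ends e ∨ ends0 ends e = ((ends e).2, (ends e).1) := by
  unfold ends0; split
  · exact Or.inl rfl
  · exact Or.inr rfl

noncomputable def classOf (p : V × V) : Finset E :=
  Finset.univ.filter (fun e => ends0 ends e = p)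

theorem mem_classOf (e : E) : e ∈ classOf ends (ends0 ends e) := by
  simp [classOf]

noncomputable def rankE (p : V × V) :
    ↥(classOf ends p) ≃ Fin (classOf ends p).card :=
  ((classOf ends p).orderIsoOfFin rfl).toEquiv.symm

noncomputable def idx (e : E) : ℕ :=
  (rankE ends (ends0 ends e) ⟨e, mem_classOf ends e⟩).val

theorem idx_eq {e : E} {p : V × V} (he : ends0 ends e = p) (hm : e ∈ classOf ends p) :
    idx ends e = (rankE ends p ⟨e, hm⟩).val := by subst he; rfl

theorem idx_val (p : V × V) (x : ↥(classOf ends p)) :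
    idx ends x.1 = (rankE ends p x).val := by
  have hm := x.2
  have hp : ends0 ends x.1 = p := (Finset.mem_filter.1 hm).2
  rw [idx_eq ends hp hm, Subtype.coe_eta]

theorem card_cond (p : V × V) (N code : ℕ) :
    Nat.card {e : E // ends0 ends e = p ∧ idx ends e % N = code}
      = Nat.card {i : Fin (classOf ends p).card // i.val % N = code} := by
  apply Nat.card_congr
  have e1 : {e : E // ends0 ends e = p ∧ idx ends e % N = code}
      ≃ {x : ↥(classOf ends p) // idx ends x.1 % N = code} :=
    ((Equiv.subtypeSubtypeEquivSubtypeInter (· ∈ classOf ends p)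
        (fun e => idx ends e % N = code)).trans
      (Equiv.subtypeEquivRight (fun e => by simp [classOf]))).symm
  exact e1.trans ((rankE ends p).subtypeEquiv (fun x => by rw [idx_val ends p x]))

end DetachAux

theorem sigma_snd {V : Type} {η : V → ℕ} {w : V} {x y : Fin (η w)}
    (h : (⟨w, x⟩ : Σ v : V, Fin (η v)) = ⟨w, y⟩) : x = y := by
  simpa using h

theorem gMult_comm {V E : Type} (ends : E → V × V) (u v : V) :
    gMult ends u v = gMult ends v u :=
  Nat.card_congr (Equiv.subtypeEquivRight fun _ => or_comm)

section Det

variable {V E : Type} [Fintype E] [LinearOrder V] [LinearOrder E]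
variable (ends : E → V × V) (η : V → ℕ)

noncomputable def lq (n i : ℕ) (hn : 2 ≤ n) : {p : Fin n × Fin n // p.1 < p.2} :=
  pairEquiv n ⟨i % n.choose 2, Nat.mod_lt _ (Nat.choose_pos hn)⟩

theorem lq_eq_iff (n i : ℕ) (hn : 2 ≤ n) (q : {p : Fin n × Fin n // p.1 < p.2}) :
    lq n i hn = q ↔ i % n.choose 2 = ((pairEquiv n).symm q).val := by
  unfold lq
  rw [Equiv.apply_eq_iff_eq_symm_apply]
  constructor
  · intro h; exact congrArg Fin.val h
  · intro h; exact Fin.ext h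

noncomputable def detCore {V : Type} [LinearOrder V] (η : V → ℕ) (hpos : ∀ w, 0 < η w) (p : V × V)
    (hp2 : p.1 = p.2 → 2 ≤ η p.1) (i : ℕ) :
    (Σ w : V, Fin (η w)) × (Σ w : V, Fin (η w)) :=
  if hab : p.1 = p.2 then
    (⟨p.1, (lq (η p.1) i (hp2 hab)).1.1⟩, ⟨p.1, (lq (η p.1) i (hp2 hab)).1.2⟩)
  else
    (⟨p.1, (pairSlot (hpos p.1) (hpos p.2) i).1⟩, ⟨p.2, (pairSlot (hpos p.1) (hpos p.2) i).2⟩)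

theorem detCore_base {V : Type} [LinearOrder V] (η : V → ℕ) (hpos : ∀ w, 0 < η w) (p : V × V)
    (hp2 : p.1 = p.2 → 2 ≤ η p.1) (i : ℕ) :
    ((detCore η hpos p hp2 i).1.1, (detCore η hpos p hp2 i).2.1) = p := by
  obtain ⟨a, b⟩ := p
  unfold detCore
  split_ifs with hab
  · exact Prod.ext_iff.2 ⟨rfl, hab⟩
  · rfl

theorem detCore_ne {V : Type} [LinearOrder V] (η : V → ℕ) (hpos : ∀ w, 0 < η w) (p : V × V)
    (hp2 : p.1 = p.2 → 2 ≤ η p.1) (i : ℕ) :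
    (detCore η hpos p hp2 i).1 ≠ (detCore η hpos p hp2 i).2 := by
  obtain ⟨a, b⟩ := p
  unfold detCore
  split_ifs with hab
  · dsimp only at hab ⊢
    intro h
    exact absurd (sigma_snd h) (ne_of_lt (lq (η a) i (hp2 hab)).2)
  · dsimp only at hab ⊢
    intro h
    exact hab (congrArg Sigma.fst h)

theorem detCore_eq_edge_iff {V : Type} [LinearOrder V] (η : V → ℕ) (hpos : ∀ w, 0 < η w) (p : V × V)
    (hp2 : p.1 = p.2 → 2 ≤ η p.1) (i : ℕ) (hle : p.1 ≤ p.2)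
    {w z : V} (hwz : w < z) (t : Fin (η w)) (s : Fin (η z)) :
    (detCore η hpos p hp2 i = (⟨w, t⟩, ⟨z, s⟩) ∨
        detCore η hpos p hp2 i = (⟨z, s⟩, ⟨w, t⟩)) ↔
      (p = (w, z) ∧ i % (η w * η z) = t.val + η w * s.val) := by
  obtain ⟨a, b⟩ := p
  unfold detCore
  split_ifs with hab
  · dsimp only at hab
    subst hab
    constructor
    · rintro (h | h)
      · exact absurd ((congrArg (fun x => x.1.1) h).symm.trans
          (congrArg (fun x => x.2.1) h)) (ne_of_lt hwz)
      · exact absurd ((congrArg (fun x => x.2.1) h).symm.trans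
          (congrArg (fun x => x.1.1) h)) (ne_of_lt hwz)
    · rintro ⟨h1, -⟩
      exact absurd ((congrArg Prod.fst h1).symm.trans (congrArg Prod.snd h1))
        (ne_of_lt hwz)
  · dsimp only at hab hle
    constructor
    · rintro (h | h)
      · have ha : a = w := congrArg (fun x => x.1.1) h
        have hb : b = z := congrArg (fun x => x.2.1) h
        subst ha; subst hb
        refine ⟨rfl, ?_⟩
        rw [← pairSlot_eq_iff (hpos a) (hpos b)]
        exact Prod.ext_iff.2
          ⟨sigma_snd (congrArg Prod.fst h), sigma_snd (congrArg Prod.snd h)⟩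
      · have ha : a = z := congrArg (fun x => x.1.1) h
        have hb : b = w := congrArg (fun x => x.2.1) h
        rw [ha, hb] at hle
        exact absurd hle (not_le.2 hwz)
    · rintro ⟨h1, h2⟩
      have ha : a = w := congrArg Prod.fst h1
      have hb : b = z := congrArg Prod.snd h1
      subst ha; subst hb
      left
      rw [(pairSlot_eq_iff (hpos a) (hpos b) i t s).2 h2]

theorem detCore_eq_loop_iff {V : Type} [LinearOrder V] (η : V → ℕ) (hpos : ∀ w, 0 < η w) (p : V × V)
    (hp2 : p.1 = p.2 → 2 ≤ η p.1) (i : ℕ)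
    {w : V} (t t' : Fin (η w)) (htt : t < t') :
    (detCore η hpos p hp2 i = (⟨w, t⟩, ⟨w, t'⟩) ∨
        detCore η hpos p hp2 i = (⟨w, t'⟩, ⟨w, t⟩)) ↔
      (p = (w, w) ∧
        i % ((η w).choose 2) = ((pairEquiv (η w)).symm ⟨(t, t'), htt⟩).val) := by
  obtain ⟨a, b⟩ := p
  unfold detCore
  split_ifs with hab
  · dsimp only at hab
    subst hab
    constructor
    · rintro (h | h)
      · have ha : a = w := congrArg (fun x => x.1.1) h
        subst ha
        refine ⟨rfl, ?_⟩
        rw [← lq_eq_iff (η a) i (hp2 rfl) ⟨(t, t'), htt⟩]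
        exact Subtype.ext (Prod.ext_iff.2
          ⟨sigma_snd (congrArg Prod.fst h), sigma_snd (congrArg Prod.snd h)⟩)
      · have ha : a = w := congrArg (fun x => x.1.1) h
        subst ha
        have h1 : (lq (η a) i (hp2 rfl)).1.1 = t' := sigma_snd (congrArg Prod.fst h)
        have h2 : (lq (η a) i (hp2 rfl)).1.2 = t := sigma_snd (congrArg Prod.snd h)
        have := (lq (η a) i (hp2 rfl)).2
        rw [h1, h2] at this
        exact absurd htt (asymm this)
    · rintro ⟨h1, h2⟩
      have ha : a = w := congrArg Prod.fst h1
      subst ha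
      left
      rw [(lq_eq_iff (η a) i (hp2 rfl) ⟨(t, t'), htt⟩).2 h2]
  · constructor
    · rintro (h | h)
      · have ha : a = w := congrArg (fun x => x.1.1) h
        have hb : b = w := congrArg (fun x => x.2.1) h
        exact absurd (ha.trans hb.symm) hab
      · have ha : a = w := congrArg (fun x => x.1.1) h
        have hb : b = w := congrArg (fun x => x.2.1) h
        exact absurd (ha.trans hb.symm) hab
    · rintro ⟨h1, -⟩
      have ha : a = w := congrArg Prod.fst h1
      have hb : b = w := congrArg Prod.snd h1
      exact absurd (ha.trans hb.symm) hab

end Det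

section DetGlue

variable {V E : Type} [Fintype E] [LinearOrder V] [LinearOrder E]
variable (ends : E → V × V) (η : V → ℕ)

theorem loop_of_diag {e : E} (hab : (ends0 ends e).1 = (ends0 ends e).2) :
    ends e = ((ends0 ends e).1, (ends0 ends e).1) := by
  rcases ends0_spec ends e with h | h
  · rw [← h]
    exact Prod.ext_iff.2 ⟨rfl, hab.symm⟩
  · have h1 : (ends0 ends e).1 = (ends e).2 := by rw [h]
    have h2 : (ends0 ends e).2 = (ends e).1 := by rw [h]
    exact Prod.ext_iff.2 ⟨by rw [← h2, hab], h1.symm⟩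

theorem two_le_of_diag (hpos : ∀ w, 0 < η w) (hloop : ∀ w, η w = 1 → gLoops ends w = 0)
    {e : E} (hab : (ends0 ends e).1 = (ends0 ends e).2) :
    2 ≤ η (ends0 ends e).1 := by
  have hne : gLoops ends (ends0 ends e).1 ≠ 0 := by
    unfold gLoops
    have hnon : Nonempty {e' : E // ends e' = ((ends0 ends e).1, (ends0 ends e).1)} :=
      ⟨⟨e, loop_of_diag ends hab⟩⟩
    rw [Nat.card_ne_zero]
    exact ⟨hnon, inferInstance⟩
  have h1 := hpos (ends0 ends e).1
  have h2 : η (ends0 ends e).1 ≠ 1 := fun h => hne (hloop _ h)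
  omega

noncomputable def det (hpos : ∀ w, 0 < η w) (hloop : ∀ w, η w = 1 → gLoops ends w = 0)
    (e : E) : (Σ w : V, Fin (η w)) × (Σ w : V, Fin (η w)) :=
  detCore η hpos (ends0 ends e) (fun hab => two_le_of_diag ends η hpos hloop hab)
    (idx ends e)

theorem det_detachment (hpos : ∀ w, 0 < η w)
    (hloop : ∀ w, η w = 1 → gLoops ends w = 0) (e : E) :
    ((det ends η hpos hloop e).1.1, (det ends η hpos hloop e).2.1) = ends e ∨
      ((det ends η hpos hloop e).2.1, (det ends η hpos hloop e).1.1) = ends e := by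
  have hbase := detCore_base η hpos (ends0 ends e)
    (fun hab => two_le_of_diag ends η hpos hloop hab) (idx ends e)
  rcases ends0_spec ends e with h | h
  · left
    unfold det
    rw [hbase, h]
  · right
    unfold det
    have h1 : (det ends η hpos hloop e).1.1 = (ends e).2 := by
      unfold det; rw [show (detCore η hpos (ends0 ends e)
        (fun hab => two_le_of_diag ends η hpos hloop hab) (idx ends e)).1.1
          = (ends0 ends e).1 from congrArg Prod.fst hbase, h]
    have h2 : (det ends η hpos hloop e).2.1 = (ends e).1 := by
      unfold det; rw [show (detCore η hpos (ends0 ends e)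
        (fun hab => two_le_of_diag ends η hpos hloop hab) (idx ends e)).2.1
          = (ends0 ends e).2 from congrArg Prod.snd hbase, h]
    unfold det at h1 h2
    exact Prod.ext_iff.2 ⟨h2, h1⟩

theorem det_ne (hpos : ∀ w, 0 < η w) (hloop : ∀ w, η w = 1 → gLoops ends w = 0) (e : E) :
    (det ends η hpos hloop e).1 ≠ (det ends η hpos hloop e).2 :=
  detCore_ne η hpos _ _ _

theorem gMult_eq_card {w z : V} (hwz : w < z) :
    gMult ends w z = (classOf ends (w, z)).card := by
  classical
  unfold gMult
  rw [Nat.card_eq_fintype_card, Fintype.card_subtype]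
  apply congrArg Finset.card
  unfold classOf
  apply Finset.filter_congr
  intro e _
  constructor
  · rintro (h | h)
    · unfold ends0; rw [h, if_pos (le_of_lt hwz)]
    · unfold ends0; rw [h, if_neg (not_le.2 hwz)]
  · intro h
    rcases ends0_spec ends e with h0 | h0
    · left; rw [← h0, h]
    · right
      rw [h0] at h
      exact Prod.ext_iff.2 ⟨congrArg Prod.snd h, congrArg Prod.fst h⟩

theorem gLoops_eq_card (w : V) :
    gLoops ends w = (classOf ends (w, w)).card := by
  classical
  unfold gLoops
  rw [Nat.card_eq_fintype_card, Fintype.card_subtype]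
  apply congrArg Finset.card
  unfold classOf
  apply Finset.filter_congr
  intro e _
  constructor
  · intro h
    rcases ends0_spec ends e with h0 | h0
    · rw [h0, h]
    · rw [h0, h]
  · intro h
    rcases ends0_spec ends e with h0 | h0
    · rw [← h0, h]
    · rw [h0] at h
      exact Prod.ext_iff.2 ⟨congrArg Prod.snd h, congrArg Prod.fst h⟩

end DetGlue

/-- (A3) and (A5): any `k`-edge-colored finite multigraph `H` with `η : V(H) → ℕ`
(`η(w) = 1` implying no loops at `w`) admits a loopless `η`-detachment `G` in which,
for `η(w) ≥ 2` and distinct split vertices `u, u'` over `w`, the multiplicity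
`m_G(u,u')` lies between `⌊ℓ_H(w)/C(η(w),2)⌋` and `⌈ℓ_H(w)/C(η(w),2)⌉`, and for
distinct `w, z` and split vertices `u` over `w`, `v` over `z`, `m_G(u,v)` lies
between `⌊m_H(w,z)/(η(w)η(z))⌋` and `⌈m_H(w,z)/(η(w)η(z))⌉`. -/
theorem detachment_multiplicities {V E : Type} [Fintype V] [Fintype E] {k : ℕ}
    (ends : E → V × V) (c : E → Fin k) (η : V → ℕ)
    (hpos : ∀ w, 0 < η w) (hloop : ∀ w, η w = 1 → gLoops ends w = 0) :
    ∃ ends' : E → (Σ w : V, Fin (η w)) × (Σ w : V, Fin (η w)),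
      IsDetachment ends η ends' ∧
      (∀ e, (ends' e).1 ≠ (ends' e).2) ∧
      (∀ (w : V), 2 ≤ η w → ∀ t t' : Fin (η w), t ≠ t' →
        ⌊(gLoops ends w : ℚ) / (Nat.choose (η w) 2 : ℚ)⌋ ≤
          (gMult ends' ⟨w, t⟩ ⟨w, t'⟩ : ℤ) ∧
        (gMult ends' ⟨w, t⟩ ⟨w, t'⟩ : ℤ) ≤
          ⌈(gLoops ends w : ℚ) / (Nat.choose (η w) 2 : ℚ)⌉) ∧
      (∀ (w z : V), w ≠ z → ∀ (t : Fin (η w)) (s : Fin (η z)),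
        ⌊(gMult ends w z : ℚ) / ((η w : ℚ) * (η z : ℚ))⌋ ≤
          (gMult ends' ⟨w, t⟩ ⟨z, s⟩ : ℤ) ∧
        (gMult ends' ⟨w, t⟩ ⟨z, s⟩ : ℤ) ≤
          ⌈(gMult ends w z : ℚ) / ((η w : ℚ) * (η z : ℚ))⌉) := by
  letI : LinearOrder V :=
    LinearOrder.lift' (Fintype.equivFin V) (Fintype.equivFin V).injective
  letI : LinearOrder E :=
    LinearOrder.lift' (Fintype.equivFin E) (Fintype.equivFin E).injective
  refine ⟨det ends η hpos hloop, det_detachment ends η hpos hloop,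
    det_ne ends η hpos hloop, ?_, ?_⟩
  · have key : ∀ (w : V) (t t' : Fin (η w)), t < t' →
        ⌊(gLoops ends w : ℚ) / (Nat.choose (η w) 2 : ℚ)⌋ ≤
          (gMult (det ends η hpos hloop) ⟨w, t⟩ ⟨w, t'⟩ : ℤ) ∧
        (gMult (det ends η hpos hloop) ⟨w, t⟩ ⟨w, t'⟩ : ℤ) ≤
          ⌈(gLoops ends w : ℚ) / (Nat.choose (η w) 2 : ℚ)⌉ := by
      intro w t t' htt
      have h2 : 2 ≤ η w := by
        have h1 : t.val < t'.val := htt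
        have h3 := t'.isLt
        omega
      have hN : 0 < (η w).choose 2 := Nat.choose_pos h2
      have hcode : ((pairEquiv (η w)).symm ⟨(t, t'), htt⟩).val < (η w).choose 2 :=
        ((pairEquiv (η w)).symm ⟨(t, t'), htt⟩).isLt
      have hcount : gMult (det ends η hpos hloop) ⟨w, t⟩ ⟨w, t'⟩
          = Nat.card {i : Fin (classOf ends (w, w)).card //
              i.val % ((η w).choose 2) = ((pairEquiv (η w)).symm ⟨(t, t'), htt⟩).val} := by
        unfold gMult det
        rw [Nat.card_congr (Equiv.subtypeEquivRight (fun e =>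
          detCore_eq_loop_iff η hpos (ends0 ends e) _ (idx ends e) t t' htt))]
        exact card_cond ends (w, w) ((η w).choose 2) _
      rw [gLoops_eq_card ends w, hcount]
      exact bounds_final _ _ _ hN
        (card_mod_lower _ _ _ hN hcode)
        (card_mod_upper _ _ _ hN)
        (fun hdvd => card_mod_upper_dvd _ _ _ hN hdvd)
    intro w _ t t' hne
    rcases hne.lt_or_gt with h | h
    · exact key w t t' h
    · obtain ⟨hlo, hhi⟩ := key w t' t h
      rw [gMult_comm (det ends η hpos hloop) ⟨w, t'⟩ ⟨w, t⟩] at hlo hhi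
      exact ⟨hlo, hhi⟩
  · have key : ∀ (w z : V), w < z → ∀ (t : Fin (η w)) (s : Fin (η z)),
        ⌊(gMult ends w z : ℚ) / ((η w : ℚ) * (η z : ℚ))⌋ ≤
          (gMult (det ends η hpos hloop) ⟨w, t⟩ ⟨z, s⟩ : ℤ) ∧
        (gMult (det ends η hpos hloop) ⟨w, t⟩ ⟨z, s⟩ : ℤ) ≤
          ⌈(gMult ends w z : ℚ) / ((η w : ℚ) * (η z : ℚ))⌉ := by
      intro w z hwz t s
      have hN : 0 < η w * η z := Nat.mul_pos (hpos w) (hpos z)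
      have hcode : t.val + η w * s.val < η w * η z := code_lt t s
      have hcount : gMult (det ends η hpos hloop) ⟨w, t⟩ ⟨z, s⟩
          = Nat.card {i : Fin (classOf ends (w, z)).card //
              i.val % (η w * η z) = t.val + η w * s.val} := by
        unfold gMult det
        rw [Nat.card_congr (Equiv.subtypeEquivRight (fun e =>
          detCore_eq_edge_iff η hpos (ends0 ends e) _ (idx ends e)
            (ends0_le ends e) hwz t s))]
        exact card_cond ends (w, z) (η w * η z) _
      have hcast : ((η w : ℚ) * (η z : ℚ)) = ((η w * η z : ℕ) : ℚ) := by
        push_cast; ring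
      rw [hcast, gMult_eq_card ends hwz, hcount]
      exact bounds_final _ _ _ hN
        (card_mod_lower _ _ _ hN hcode)
        (card_mod_upper _ _ _ hN)
        (fun hdvd => card_mod_upper_dvd _ _ _ hN hdvd)
    intro w z hne t s
    rcases hne.lt_or_gt with h | h
    · exact key w z h t s
    · obtain ⟨hlo, hhi⟩ := key z w h s t
      rw [gMult_comm ends z w, gMult_comm (det ends η hpos hloop) ⟨z, s⟩ ⟨w, t⟩,
        mul_comm ((η z : ℚ)) ((η w : ℚ))] at hlo hhi
      exact ⟨hlo, hhi⟩
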